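/- Let M = {0} ∪ {2^{−n} : n ∈ ℕ} ⊆ ℝ and K = M × [0,1] ⊆ ℝ². Then there exists f : K → ℝ admitting a continuous derivative on K (so f ∈ C¹(K)) that is not Lipschitz continuous on K; in particular, there is no F ∈ C¹(ℝ²) with F|_K = f, so C¹(K) ≠ C¹(ℝ²|K). -/

import Mathlib

open Set Filter Topology MeasureTheory
open scoped NNReal ENNReal

noncomputable section

/-- `df` is a (not necessarily unique) derivative of `f` on the set `K`:
at every `x ∈ K`, `(f y - f x - ⟪df x, y - x⟫)/‖y - x‖ → 0` as `y → x` within `K`. -/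
def IsDerivOn {d : ℕ} (K : Set (EuclideanSpace ℝ (Fin d)))
    (f : EuclideanSpace ℝ (Fin d) → ℝ)
    (df : EuclideanSpace ℝ (Fin d) → EuclideanSpace ℝ (Fin d)) : Prop :=
  ∀ x ∈ K, Filter.Tendsto
    (fun y => (f y - f x - (inner ℝ (df x) (y - x) : ℝ)) / ‖y - x‖)
    (𝓝[K \ {x}] x) (𝓝 0)

/-- The set `K = ({0} ∪ {2^{-n} : n ∈ ℕ}) × [0,1] ⊆ ℝ²`. -/
def prodSet : Set (EuclideanSpace ℝ (Fin 2)) :=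
  {p | (p 0 = 0 ∨ ∃ n : ℕ, p 0 = (2:ℝ)⁻¹ ^ n) ∧ p 1 ∈ Icc (0:ℝ) 1}


abbrev E2 := EuclideanSpace ℝ (Fin 2)

lemma coord_abs_le (v : E2) (i : Fin 2) : |v i| ≤ ‖v‖ := by
  rw [EuclideanSpace.norm_eq]
  rw [show |v i| = Real.sqrt (|v i|^2) by rw [Real.sqrt_sq_eq_abs, abs_abs]]
  apply Real.sqrt_le_sqrt
  calc |v i|^2 = ‖v i‖^2 := by rw [Real.norm_eq_abs]
  _ ≤ ∑ j, ‖v j‖^2 := Finset.single_le_sum (f := fun j => ‖v j‖^2)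
      (fun j _ => sq_nonneg _) (Finset.mem_univ i)

lemma sub_coord (v w : E2) (i : Fin 2) : (v - w) i = v i - w i := rfl

lemma e2_ext {v w : E2} (h0 : v 0 = w 0) (h1 : v 1 = w 1) : v = w := by
  refine PiLp.ext fun i => ?_; fin_cases i <;> assumption

def pt (x y : ℝ) : E2 := (WithLp.equiv 2 (Fin 2 → ℝ)).symm ![x, y]

@[simp] lemma pt_0 (x y : ℝ) : pt x y 0 = x := rfl
@[simp] lemma pt_1 (x y : ℝ) : pt x y 1 = y := rfl

lemma dist_pt (x y x' : ℝ) : dist (pt x y) (pt x' y) = |x - x'| := by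
  rw [EuclideanSpace.dist_eq, Fin.sum_univ_two]
  simp [Real.dist_eq, Real.sqrt_sq_eq_abs, abs_abs, sq_abs]

lemma pow_half_inj {m n : ℕ} (h : (2:ℝ)⁻¹ ^ m = (2:ℝ)⁻¹ ^ n) : m = n := by
  have h0 : (0:ℝ) < 2⁻¹ := by norm_num
  have h1 : (2:ℝ)⁻¹ < 1 := by norm_num
  by_contra hne
  rcases Nat.lt_or_ge m n with hlt | hge
  · have := pow_lt_pow_right_of_lt_one₀ h0 h1 hlt; linarith [h]
  · have hlt : n < m := lt_of_le_of_ne hge (Ne.symm hne)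
    have := pow_lt_pow_right_of_lt_one₀ h0 h1 hlt; linarith [h]

def psi (u : ℝ) : ℝ := (1 + u^2)⁻¹
def psi' (u : ℝ) : ℝ := -(2*u) / (1 + u^2)^2
lemma hasDerivAt_psi (u : ℝ) : HasDerivAt psi (psi' u) u := by
  have h2 : HasDerivAt (fun v : ℝ => 1 + v^2) (2*u) u := by
    simpa using (hasDerivAt_pow 2 u).const_add 1
  have hne : (1 + u^2) ≠ 0 := by positivity
  exact h2.inv hne


/-- half to the n -/
def hn (n : ℕ) : ℝ := (2:ℝ)⁻¹ ^ n
def uu (n : ℕ) (t : ℝ) : ℝ := 2*(n:ℝ)^2 * (t - (1 - 1/(2*(n:ℝ))))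
def gg (n : ℕ) (t : ℝ) : ℝ := (n:ℝ) * hn n * psi (uu n t)
def dd (n : ℕ) (t : ℝ) : ℝ := (n:ℝ) * hn n * (psi' (uu n t) * (2*(n:ℝ)^2))

lemma hn_pos (n : ℕ) : 0 < hn n := by unfold hn; positivity
lemma hn_lt_one {n : ℕ} (hn1 : 1 ≤ n) : hn n < 1 := by
  rw [hn]; exact pow_lt_one₀ (by norm_num) (by norm_num) (by omega)

lemma hasDerivAt_uu (n : ℕ) (t : ℝ) : HasDerivAt (uu n) (2*(n:ℝ)^2) t := by
  have h := ((hasDerivAt_id t).sub_const (1 - 1/(2*(n:ℝ)))).const_mul (2*(n:ℝ)^2)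
  rw [mul_one] at h; exact h

lemma hasDerivAt_gg (n : ℕ) (t : ℝ) : HasDerivAt (gg n) (dd n t) t := by
  exact ((hasDerivAt_psi (uu n t)).comp t (hasDerivAt_uu n t)).const_mul ((n:ℝ) * hn n)

lemma continuous_dd (n : ℕ) : Continuous (dd n) := by
  have hu : Continuous (uu n) := by unfold uu; fun_prop
  have hpsi' : Continuous psi' := by
    unfold psi'
    apply Continuous.div (by fun_prop) (by fun_prop)
    intro x; positivity
  unfold dd; fun_prop

lemma gg_nonneg (n : ℕ) (t : ℝ) : 0 ≤ gg n t := by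
  unfold gg hn psi
  have : (0:ℝ) < 1 + (uu n t)^2 := by positivity
  positivity

lemma psi_pos (u : ℝ) : 0 < psi u := inv_pos.2 (by positivity)
lemma psi_le_one (u : ℝ) : psi u ≤ 1 := by
  rw [psi, inv_le_one_iff₀]; right; nlinarith [sq_nonneg u]
lemma psi_le_inv_sq {u : ℝ} (hu : u ≠ 0) : psi u ≤ (u^2)⁻¹ :=
  inv_anti₀ (by positivity) (by nlinarith)
lemma abs_psi'_le_one (u : ℝ) : |psi' u| ≤ 1 := by
  rw [psi', abs_div]
  have h1 : |-(2*u)| = 2*|u| := by rw [abs_neg, abs_mul]; norm_num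
  have h2 : |(1 + u^2)^2| = (1+u^2)^2 := abs_of_pos (by positivity)
  rw [h1, h2, div_le_one (by positivity)]
  nlinarith [sq_nonneg (|u| - 1), sq_abs u, abs_nonneg u, sq_nonneg u]

lemma gg_le (n : ℕ) (t : ℝ) : gg n t ≤ (n:ℝ) * hn n := by
  have h1 := psi_le_one (uu n t)
  have h3 := hn_pos n
  have h2 : (0:ℝ) ≤ (n:ℝ) * hn n := by positivity
  calc gg n t = (n:ℝ) * hn n * psi (uu n t) := rfl
  _ ≤ (n:ℝ) * hn n * 1 := by nlinarith
  _ = (n:ℝ) * hn n := by ring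

lemma abs_dd_le (n : ℕ) (t : ℝ) : |dd n t| ≤ 2*(n:ℝ)^3 * hn n := by
  have h1 := abs_psi'_le_one (uu n t)
  have h2 := abs_nonneg (psi' (uu n t))
  have h3 := hn_pos n
  have h4 : (0:ℝ) ≤ (n:ℝ) := Nat.cast_nonneg n
  rw [dd, abs_mul, abs_mul, abs_mul]
  rw [abs_of_nonneg h4, abs_of_pos h3, abs_of_nonneg (by positivity : (0:ℝ) ≤ 2*(n:ℝ)^2)]
  nlinarith [mul_le_mul_of_nonneg_left h1 (by positivity : (0:ℝ) ≤ 2*(n:ℝ)^3 * hn n)]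

lemma uu_eq {n : ℕ} (hn1 : 1 ≤ n) (t : ℝ) : uu n t = (n:ℝ) - 2*(n:ℝ)^2*(1-t) := by
  have h : (n:ℝ) ≠ 0 := Nat.cast_ne_zero.2 (by omega)
  rw [uu]; field_simp; ring

lemma tendsto_cube : Tendsto (fun n : ℕ => 2*(n:ℝ)^3 * hn n) atTop (𝓝 0) := by
  have h := (tendsto_pow_const_mul_const_pow_of_lt_one 3 (by norm_num : (0:ℝ) ≤ 2⁻¹)
    (by norm_num : (2:ℝ)⁻¹ < 1)).const_mul 2
  simpa [hn, mul_assoc] using h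

lemma tendsto_sq : Tendsto (fun n : ℕ => 4*(n:ℝ)^2 * hn n) atTop (𝓝 0) := by
  have h := (tendsto_pow_const_mul_const_pow_of_lt_one 2 (by norm_num : (0:ℝ) ≤ 2⁻¹)
    (by norm_num : (2:ℝ)⁻¹ < 1)).const_mul 4
  simpa [hn, mul_assoc] using h

/-- L1 : uniform bound used at the corner point (0,1). -/
lemma L1 {ε : ℝ} (hε : 0 < ε) :
    ∃ N : ℕ, ∀ n ≥ N, ∀ t ∈ Icc (0:ℝ) 1, gg n t ≤ ε * max (hn n) (1 - t) := by
  have h1 : ∀ᶠ n : ℕ in atTop, (1:ℝ) ≤ (n:ℝ) := by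
    filter_upwards [eventually_ge_atTop 1] with n hn
    exact_mod_cast hn
  have h2 : ∀ᶠ n : ℕ in atTop, 4/(n:ℝ) ≤ ε := by
    have := tendsto_natCast_atTop_atTop (R := ℝ)
    filter_upwards [this.eventually_ge_atTop (4/ε), eventually_ge_atTop 1] with n hn hn'
    rw [div_le_iff₀ (by positivity)]
    rw [div_le_iff₀ hε] at hn
    nlinarith
  have h3 : ∀ᶠ n : ℕ in atTop, 4*(n:ℝ)^2 * hn n ≤ ε :=
    tendsto_sq.eventually_le_const hε
  rcases eventually_atTop.1 (h1.and (h2.and h3)) with ⟨N, hN⟩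
  refine ⟨N, fun n hnN t ht => ?_⟩
  obtain ⟨hc1, hc2, hc3⟩ := hN n hnN
  have hpos := hn_pos n
  set s := 1 - t with hs
  have hs0 : 0 ≤ s := by simp [hs]; linarith [ht.2]
  have hs1 : s ≤ 1 := by simp [hs]; linarith [ht.1]
  have hun : uu n t = (n:ℝ) - 2*(n:ℝ)^2*s := by
    rw [uu_eq (by exact_mod_cast Nat.one_le_cast.1 hc1) t]
  rcases le_or_gt s (1/(4*(n:ℝ))) with hcase | hcase
  · -- small s : use decay of psi
    have hu : (n:ℝ)/2 ≤ uu n t := by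
      rw [hun]
      have : 2*(n:ℝ)^2*s ≤ (n:ℝ)/2 := by
        have := mul_le_mul_of_nonneg_left hcase (by positivity : (0:ℝ) ≤ 2*(n:ℝ)^2)
        calc 2*(n:ℝ)^2*s ≤ 2*(n:ℝ)^2*(1/(4*(n:ℝ))) := this
        _ = (n:ℝ)/2 := by field_simp; ring
      linarith
    have hune : uu n t ≠ 0 := ne_of_gt (lt_of_lt_of_le (by positivity) hu)
    have hpsi : psi (uu n t) ≤ 4/(n:ℝ)^2 := by
      calc psi (uu n t) ≤ ((uu n t)^2)⁻¹ := psi_le_inv_sq hune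
      _ ≤ (((n:ℝ)/2)^2)⁻¹ := by
          apply inv_anti₀ (by positivity)
          apply pow_le_pow_left₀ (by positivity) hu
      _ = 4/(n:ℝ)^2 := by field_simp; ring
    calc gg n t = (n:ℝ) * hn n * psi (uu n t) := rfl
    _ ≤ (n:ℝ) * hn n * (4/(n:ℝ)^2) := by
        apply mul_le_mul_of_nonneg_left hpsi (by positivity)
    _ = (4/(n:ℝ)) * hn n := by field_simp
    _ ≤ ε * hn n := mul_le_mul_of_nonneg_right hc2 (le_of_lt hpos)
    _ ≤ ε * max (hn n) (1-t) := by
        apply mul_le_mul_of_nonneg_left (le_max_left _ _) (le_of_lt hε)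
  · -- large s : crude bound
    have hA : (n:ℝ) * hn n ≤ ε * (1/(4*(n:ℝ))) := by
      rw [show (n:ℝ) * hn n = (4*(n:ℝ)^2*hn n) * (1/(4*(n:ℝ))) by field_simp]
      exact mul_le_mul_of_nonneg_right hc3 (by positivity)
    have hB : ε * (1/(4*(n:ℝ))) ≤ ε * s :=
      mul_le_mul_of_nonneg_left (le_of_lt hcase) (le_of_lt hε)
    have hC : ε * s ≤ ε * max (hn n) (1-t) :=
      mul_le_mul_of_nonneg_left (hs ▸ le_max_right (hn n) (1-t)) (le_of_lt hε)
    exact le_trans (gg_le n t) (le_trans hA (le_trans hB hC))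

/-- L2 : bound away from the top edge. -/
lemma L2 {δ ε : ℝ} (hδ : 0 < δ) (hε : 0 < ε) :
    ∃ N : ℕ, ∀ n ≥ N, ∀ t : ℝ, t ≤ 1 - δ → gg n t ≤ ε * hn n := by
  have h1 : ∀ᶠ n : ℕ in atTop, (1:ℝ) ≤ (n:ℝ) ∧ 1/δ ≤ (n:ℝ) ∧ 1/(δ^2*ε) ≤ (n:ℝ) := by
    have hc := tendsto_natCast_atTop_atTop (R := ℝ)
    filter_upwards [hc.eventually_ge_atTop 1, hc.eventually_ge_atTop (1/δ),
      hc.eventually_ge_atTop (1/(δ^2*ε))] with n a b c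
    exact ⟨a, b, c⟩
  rcases eventually_atTop.1 h1 with ⟨N, hN⟩
  refine ⟨N, fun n hnN t ht => ?_⟩
  obtain ⟨hc1, hc2, hc3⟩ := hN n hnN
  have hpos := hn_pos n
  have hnn : 1 ≤ n := by exact_mod_cast Nat.one_le_cast.1 hc1
  have hun := uu_eq hnn t
  have hs : δ ≤ 1 - t := by linarith
  have hu : uu n t ≤ -((n:ℝ)^2*δ) := by
    rw [hun]
    have h5 : (n:ℝ)*δ ≥ 1 := by
      rw [div_le_iff₀ hδ] at hc2; linarith [hc2]
    nlinarith [mul_le_mul_of_nonneg_left hs (by positivity : (0:ℝ) ≤ 2*(n:ℝ)^2)]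
  have hune : uu n t ≠ 0 := by
    intro h; rw [h] at hu; nlinarith
  have husq : ((n:ℝ)^2*δ)^2 ≤ (uu n t)^2 := by
    have h5 := pow_le_pow_left₀ (by positivity : (0:ℝ) ≤ (n:ℝ)^2*δ)
      (by linarith : (n:ℝ)^2*δ ≤ -(uu n t)) 2
    simpa [neg_sq] using h5
  have h6 : (1:ℝ) ≤ (n:ℝ)^3 * δ^2 * ε := by
    rw [div_le_iff₀ (by positivity)] at hc3
    nlinarith [hc3, hc1]
  have key : (n:ℝ) * (((n:ℝ)^2*δ)^2)⁻¹ ≤ ε := by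
    rw [mul_inv_le_iff₀ (by positivity)]
    nlinarith [mul_le_mul_of_nonneg_left h6 (by positivity : (0:ℝ) ≤ (n:ℝ))]
  calc gg n t = (n:ℝ) * hn n * psi (uu n t) := rfl
  _ ≤ (n:ℝ) * hn n * (((n:ℝ)^2*δ)^2)⁻¹ := by
      apply mul_le_mul_of_nonneg_left ?_ (by positivity)
      calc psi (uu n t) ≤ ((uu n t)^2)⁻¹ := psi_le_inv_sq hune
      _ ≤ (((n:ℝ)^2*δ)^2)⁻¹ := inv_anti₀ (by positivity) husq
  _ = ((n:ℝ) * (((n:ℝ)^2*δ)^2)⁻¹) * hn n := by ring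
  _ ≤ ε * hn n := mul_le_mul_of_nonneg_right key (le_of_lt hpos)

open Classical in
def ff (p : E2) : ℝ := if h : ∃ n : ℕ, p 0 = (2:ℝ)⁻¹ ^ n then gg h.choose (p 1) else 0
open Classical in
def DD (p : E2) : ℝ := if h : ∃ n : ℕ, p 0 = (2:ℝ)⁻¹ ^ n then dd h.choose (p 1) else 0
def dff (p : E2) : E2 := DD p • EuclideanSpace.single 1 (1:ℝ)

lemma ff_seg {p : E2} {n : ℕ} (h : p 0 = (2:ℝ)⁻¹ ^ n) : ff p = gg n (p 1) := by
  have hex : ∃ m : ℕ, p 0 = (2:ℝ)⁻¹ ^ m := ⟨n, h⟩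
  rw [ff]
  rw [dif_pos hex]
  congr 1
  exact pow_half_inj (by rw [← hex.choose_spec, h])

lemma DD_seg {p : E2} {n : ℕ} (h : p 0 = (2:ℝ)⁻¹ ^ n) : DD p = dd n (p 1) := by
  have hex : ∃ m : ℕ, p 0 = (2:ℝ)⁻¹ ^ m := ⟨n, h⟩
  rw [DD]
  rw [dif_pos hex]
  congr 1
  exact pow_half_inj (by rw [← hex.choose_spec, h])

lemma no_pow {p : E2} (h : p 0 = 0) : ¬ ∃ n : ℕ, p 0 = (2:ℝ)⁻¹ ^ n := by
  rintro ⟨n, hc⟩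
  rw [h] at hc
  have := hn_pos n
  rw [hn] at this
  linarith [hc]

lemma ff_zero {p : E2} (h : p 0 = 0) : ff p = 0 := by rw [ff, dif_neg (no_pow h)]
lemma DD_zero {p : E2} (h : p 0 = 0) : DD p = 0 := by rw [DD, dif_neg (no_pow h)]

lemma inner_dff (p q : E2) : (inner ℝ (dff p) (q - p) : ℝ) = DD p * (q 1 - p 1) := by
  rw [dff, real_inner_smul_left, EuclideanSpace.inner_single_left]
  norm_num

lemma isolate {n : ℕ} {p q : E2} (hp : p 0 = (2:ℝ)⁻¹ ^ n) (hq : q ∈ prodSet)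
    (hd : ‖q - p‖ < (2:ℝ)⁻¹ ^ (n+2)) : q 0 = p 0 := by
  have h0 : |q 0 - p 0| ≤ ‖q - p‖ := coord_abs_le (q - p) 0
  have hA : (0:ℝ) < (2:ℝ)⁻¹ ^ n := by positivity
  have h2 : ((2:ℝ)⁻¹) ^ (n+2) = (2:ℝ)⁻¹ ^ n * 4⁻¹ := by rw [pow_add]; norm_num
  rcases hq.1 with hz | ⟨m, hm⟩
  · exfalso
    rw [hz, hp] at h0
    rw [h2] at hd
    have : |0 - (2:ℝ)⁻¹ ^ n| = (2:ℝ)⁻¹ ^ n := by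
      rw [zero_sub, abs_neg, abs_of_pos hA]
    linarith
  · rcases Nat.lt_trichotomy m n with hlt | heq | hgt
    · exfalso
      have hle : (2:ℝ)⁻¹ ^ n ≤ (2:ℝ)⁻¹ ^ (m+1) :=
        pow_le_pow_of_le_one (by norm_num) (by norm_num) (by omega)
      have h3 : (2:ℝ)⁻¹ ^ (m+1) = (2:ℝ)⁻¹ ^ m * 2⁻¹ := by rw [pow_succ]
      have hq0 : q 0 - p 0 ≥ (2:ℝ)⁻¹ ^ n := by
        rw [hm, hp]; nlinarith [hA]
      have := le_abs_self (q 0 - p 0)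
      rw [h2] at hd
      linarith
    · rw [hm, hp, heq]
    · exfalso
      have hle : (2:ℝ)⁻¹ ^ m ≤ (2:ℝ)⁻¹ ^ (n+1) :=
        pow_le_pow_of_le_one (by norm_num) (by norm_num) (by omega)
      have h3 : (2:ℝ)⁻¹ ^ (n+1) = (2:ℝ)⁻¹ ^ n * 2⁻¹ := by rw [pow_succ]
      have hq0 : p 0 - q 0 ≥ (2:ℝ)⁻¹ ^ n * 2⁻¹ := by
        rw [hm, hp]; nlinarith
      have := neg_abs_le (q 0 - p 0)
      rw [h2] at hd
      linarith

lemma segDeriv {p : E2} {n : ℕ} (hp : p 0 = (2:ℝ)⁻¹ ^ n) :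
    Tendsto (fun q => (ff q - ff p - (inner ℝ (dff p) (q - p) : ℝ)) / ‖q - p‖)
      (𝓝[prodSet \ {p}] p) (𝓝 0) := by
  have hDp : DD p = dd n (p 1) := DD_seg hp
  -- the 1D difference quotient tends to 0
  have h1d := hasDerivAt_iff_tendsto.1 (hasDerivAt_gg n (p 1))
  have hproj : Tendsto (fun q : E2 => q 1) (𝓝[prodSet \ {p}] p) (𝓝 (p 1)) :=
    (((EuclideanSpace.proj (1 : Fin 2)).continuous.tendsto p).mono_left nhdsWithin_le_nhds)
  have hcomp := h1d.comp hproj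
  apply squeeze_zero_norm' _ hcomp
  have hball : ∀ᶠ q in 𝓝[prodSet \ {p}] p, dist q p < (2:ℝ)⁻¹ ^ (n+2) := by
    apply eventually_nhdsWithin_of_eventually_nhds
    have : Metric.ball p ((2:ℝ)⁻¹ ^ (n+2)) ∈ 𝓝 p := Metric.ball_mem_nhds p (by positivity)
    filter_upwards [this] with q hq
    exact hq
  filter_upwards [hball, self_mem_nhdsWithin] with q hq1 hq2
  have hq0 : q 0 = p 0 := isolate hp hq2.1 (by rwa [dist_eq_norm] at hq1)
  have hq0' : q 0 = (2:ℝ)⁻¹ ^ n := by rw [hq0, hp]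
  have hne : q 1 ≠ p 1 := by
    intro h
    exact hq2.2 (e2_ext hq0 h)
  have hlow : 0 < |q 1 - p 1| := by
    rw [abs_pos]; exact sub_ne_zero.2 hne
  have hle : |q 1 - p 1| ≤ ‖q - p‖ := by
    have := coord_abs_le (q - p) 1
    simpa using this
  have hAeq : gg n (q 1) - gg n (p 1) - (q 1 - p 1) • dd n (p 1)
      = gg n (q 1) - gg n (p 1) - dd n (p 1) * (q 1 - p 1) := by
    rw [smul_eq_mul]; ring
  calc ‖(ff q - ff p - (inner ℝ (dff p) (q - p) : ℝ)) / ‖q - p‖‖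
      = |gg n (q 1) - gg n (p 1) - dd n (p 1) * (q 1 - p 1)| / ‖q - p‖ := by
        rw [ff_seg hq0', ff_seg hp, inner_dff, hDp, Real.norm_eq_abs, abs_div,
          abs_of_nonneg (norm_nonneg (q - p))]
    _ ≤ |gg n (q 1) - gg n (p 1) - dd n (p 1) * (q 1 - p 1)| / |q 1 - p 1| :=
        div_le_div_of_nonneg_left (abs_nonneg _) hlow hle
    _ = ‖q 1 - p 1‖⁻¹ * ‖gg n (q 1) - gg n (p 1) - (q 1 - p 1) • dd n (p 1)‖ := by
        rw [hAeq, Real.norm_eq_abs, Real.norm_eq_abs, div_eq_inv_mul]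

lemma pow_lt_imp {m N : ℕ} (h : (2:ℝ)⁻¹ ^ m < (2:ℝ)⁻¹ ^ N) : N ≤ m := by
  by_contra hc
  push_neg at hc
  have := pow_le_pow_of_le_one (by norm_num : (0:ℝ) ≤ 2⁻¹) (by norm_num) (le_of_lt hc)
  linarith

lemma key0 {p : E2} (hp0 : p 0 = 0) (q : E2) :
    (ff q - ff p - (inner ℝ (dff p) (q - p) : ℝ)) / ‖q - p‖ = ff q / ‖q - p‖ := by
  rw [ff_zero hp0, inner_dff, DD_zero hp0, zero_mul, sub_zero, sub_zero]

lemma zeroDeriv {p : E2} (hp0 : p 0 = 0) (hp : p ∈ prodSet) :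
    Tendsto (fun q => (ff q - ff p - (inner ℝ (dff p) (q - p) : ℝ)) / ‖q - p‖)
      (𝓝[prodSet \ {p}] p) (𝓝 0) := by
  rw [Metric.tendsto_nhdsWithin_nhds]
  intro ε hε
  have hp1 : p 1 ∈ Icc (0:ℝ) 1 := hp.2
  have main : ∃ δ > 0, ∀ {q : E2}, q ∈ prodSet → q ≠ p → dist q p < δ →
      ff q ≤ (ε/2) * ‖q - p‖ := by
    rcases lt_or_eq_of_le hp1.2 with h1 | h1
    · -- p 1 < 1, use L2
      set δ0 : ℝ := (1 - p 1)/2 with hδ0def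
      have hδ0 : 0 < δ0 := by simp [hδ0def]; linarith
      obtain ⟨N, hN⟩ := L2 hδ0 (half_pos hε)
      refine ⟨min ((2:ℝ)⁻¹ ^ N) δ0, lt_min (by positivity) hδ0, ?_⟩
      intro q hq hqp hdist
      rcases hq.1 with hz | ⟨m, hm⟩
      · rw [ff_zero hz]; positivity
      · have hcle : |q 0 - p 0| ≤ ‖q - p‖ := coord_abs_le (q - p) 0
        have hd : dist q p = ‖q - p‖ := dist_eq_norm q p
        have hm0 : (2:ℝ)⁻¹ ^ m ≤ ‖q - p‖ := by
          rw [hm, hp0, sub_zero, abs_of_pos (by positivity : (0:ℝ) < (2:ℝ)⁻¹ ^ m)] at hcle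
          exact hcle
        have hmN : N ≤ m := by
          apply pow_lt_imp
          calc (2:ℝ)⁻¹ ^ m ≤ ‖q - p‖ := hm0
          _ < min ((2:ℝ)⁻¹ ^ N) δ0 := by rw [← hd]; exact hdist
          _ ≤ (2:ℝ)⁻¹ ^ N := min_le_left _ _
        have ht : q 1 ≤ 1 - δ0 := by
          have h1le : |q 1 - p 1| ≤ ‖q - p‖ := coord_abs_le (q - p) 1
          have : |q 1 - p 1| < δ0 := by
            calc |q 1 - p 1| ≤ ‖q - p‖ := h1le
            _ < min ((2:ℝ)⁻¹ ^ N) δ0 := by rw [← hd]; exact hdist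
            _ ≤ δ0 := min_le_right _ _
          have := abs_lt.1 this
          simp only [hδ0def] at this ⊢
          linarith [this.2]
        rw [ff_seg hm]
        calc gg m (q 1) ≤ (ε/2) * hn m := hN m hmN (q 1) ht
        _ ≤ (ε/2) * ‖q - p‖ := by
            apply mul_le_mul_of_nonneg_left _ (by positivity)
            rw [hn]; exact hm0
    · -- p 1 = 1, use L1
      obtain ⟨N, hN⟩ := L1 (half_pos hε)
      refine ⟨(2:ℝ)⁻¹ ^ N, by positivity, ?_⟩
      intro q hq hqp hdist
      rcases hq.1 with hz | ⟨m, hm⟩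
      · rw [ff_zero hz]; positivity
      · have hcle : |q 0 - p 0| ≤ ‖q - p‖ := coord_abs_le (q - p) 0
        have hd : dist q p = ‖q - p‖ := dist_eq_norm q p
        have hm0 : (2:ℝ)⁻¹ ^ m ≤ ‖q - p‖ := by
          rw [hm, hp0, sub_zero, abs_of_pos (by positivity : (0:ℝ) < (2:ℝ)⁻¹ ^ m)] at hcle
          exact hcle
        have hmN : N ≤ m := by
          apply pow_lt_imp
          calc (2:ℝ)⁻¹ ^ m ≤ ‖q - p‖ := hm0
          _ < (2:ℝ)⁻¹ ^ N := by rw [← hd]; exact hdist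
        have h1le : 1 - q 1 ≤ ‖q - p‖ := by
          have h5 := coord_abs_le (q - p) 1
          have h4 : (q - p) 1 = q 1 - p 1 := rfl
          rw [h4] at h5
          have h2 : 1 - q 1 ≤ |q 1 - p 1| := by
            rw [← h1]
            exact le_trans (by linarith [le_abs_self (p 1 - q 1)]) (le_of_eq (abs_sub_comm _ _))
          linarith [h5]
        rw [ff_seg hm]
        calc gg m (q 1) ≤ (ε/2) * max (hn m) (1 - q 1) := hN m hmN (q 1) hq.2
        _ ≤ (ε/2) * ‖q - p‖ := by
            apply mul_le_mul_of_nonneg_left _ (by positivity)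
            apply max_le _ h1le
            rw [hn]; exact hm0
  obtain ⟨δ, hδ, hmain⟩ := main
  refine ⟨δ, hδ, ?_⟩
  intro q hq hdist
  have hqp : q ≠ p := fun h => hq.2 (by simp [h])
  have hnpos : 0 < ‖q - p‖ := by
    rw [norm_pos_iff]
    exact sub_ne_zero.2 hqp
  rw [key0 hp0, Real.dist_eq, sub_zero]
  have hffq : 0 ≤ ff q := by
    rcases hq.1.1 with hz | ⟨m, hm⟩
    · rw [ff_zero hz]
    · rw [ff_seg hm]; exact gg_nonneg m (q 1)
  rw [abs_of_nonneg (by positivity)]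
  rw [div_lt_iff₀ hnpos]
  calc ff q ≤ (ε/2) * ‖q - p‖ := hmain hq.1 hqp hdist
  _ < ε * ‖q - p‖ := by nlinarith

lemma contDD : ContinuousOn DD prodSet := by
  intro p hp
  rcases hp.1 with hz | ⟨n, hn'⟩
  · -- p 0 = 0 : DD is small near p
    rw [Metric.continuousWithinAt_iff]
    intro ε hε
    obtain ⟨N, hN⟩ := eventually_atTop.1 (tendsto_cube.eventually_le_const (half_pos hε))
    refine ⟨(2:ℝ)⁻¹ ^ N, by positivity, ?_⟩
    intro q hq hdist
    rw [DD_zero hz, Real.dist_eq, sub_zero]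
    rcases hq.1 with hz' | ⟨m, hm⟩
    · rw [DD_zero hz']; simpa using hε
    · have hcle : |q 0 - p 0| ≤ ‖q - p‖ := coord_abs_le (q - p) 0
      rw [hm, hz, sub_zero, abs_of_pos (by positivity : (0:ℝ) < (2:ℝ)⁻¹ ^ m)] at hcle
      have hmN : N ≤ m := by
        apply pow_lt_imp
        calc (2:ℝ)⁻¹ ^ m ≤ ‖q - p‖ := hcle
        _ < (2:ℝ)⁻¹ ^ N := by rwa [dist_eq_norm] at hdist
      rw [DD_seg hm]
      calc |dd m (q 1)| ≤ 2*(m:ℝ)^3 * hn m := abs_dd_le m (q 1)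
      _ ≤ ε/2 := hN m hmN
      _ < ε := by linarith
  · -- p 0 = 2⁻¹ ^ n : DD agrees with a continuous function near p
    have hbase : ContinuousWithinAt (fun q : E2 => dd n (q 1)) prodSet p :=
      ((continuous_dd n).comp (EuclideanSpace.proj (1 : Fin 2)).continuous).continuousWithinAt
    apply hbase.congr_of_eventuallyEq _ (DD_seg hn')
    have hball : ∀ᶠ q in 𝓝[prodSet] p, dist q p < (2:ℝ)⁻¹ ^ (n+2) := by
      apply eventually_nhdsWithin_of_eventually_nhds
      have : Metric.ball p ((2:ℝ)⁻¹ ^ (n+2)) ∈ 𝓝 p := Metric.ball_mem_nhds p (by positivity)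
      filter_upwards [this] with q hq
      exact hq
    filter_upwards [hball, self_mem_nhdsWithin] with q hq1 hq2
    have hq0 : q 0 = (2:ℝ)⁻¹ ^ n := by
      rw [isolate hn' hq2 (by rwa [dist_eq_norm] at hq1), hn']
    exact DD_seg hq0

lemma cont_dff : ContinuousOn dff prodSet :=
  ContinuousOn.smul contDD continuousOn_const

lemma isDeriv : ∀ x ∈ prodSet, Tendsto
    (fun y => (ff y - ff x - (inner ℝ (dff x) (y - x) : ℝ)) / ‖y - x‖)
    (𝓝[prodSet \ {x}] x) (𝓝 0) := by
  intro p hp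
  rcases hp.1 with hz | ⟨n, hn'⟩
  · exact zeroDeriv hz hp
  · exact segDeriv hn'

lemma notLip : ¬ ∃ C : NNReal, LipschitzOnWith C ff prodSet := by
  rintro ⟨C, hC⟩
  obtain ⟨n₀, hn₀⟩ := exists_nat_gt (C : ℝ)
  set n := n₀ + 1 with hndef
  have hCn : (C : ℝ) < n := by
    have : (n₀ : ℝ) ≤ (n : ℝ) := by exact_mod_cast Nat.le_succ n₀
    linarith
  have hn1 : (1:ℝ) ≤ (n:ℝ) := by exact_mod_cast Nat.succ_le_succ (Nat.zero_le n₀)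
  set b : ℝ := 1 - 1/(2*(n:ℝ)) with hbdef
  have hb : b ∈ Icc (0:ℝ) 1 := by
    constructor
    · have h2 : 1/(2*(n:ℝ)) ≤ 1/2 := one_div_le_one_div_of_le (by norm_num) (by linarith)
      simp only [hbdef]
      linarith
    · have h2 : 0 ≤ 1/(2*(n:ℝ)) := by positivity
      simp only [hbdef]
      linarith
  set p := pt ((2:ℝ)⁻¹ ^ n) b with hpdef
  set q := pt 0 b with hqdef
  have hp0 : p 0 = (2:ℝ)⁻¹ ^ n := pt_0 _ _
  have hq0 : q 0 = 0 := pt_0 _ _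
  have hp1 : p 1 = b := pt_1 _ _
  have hq1 : q 1 = b := pt_1 _ _
  have hpK : p ∈ prodSet := ⟨Or.inr ⟨n, hp0⟩, hp1 ▸ hb⟩
  have hqK : q ∈ prodSet := ⟨Or.inl hq0, hq1 ▸ hb⟩
  have huu : uu n b = 0 := by rw [uu, hbdef]; ring
  have hfp : ff p = (n:ℝ) * hn n := by
    rw [ff_seg hp0, hp1, gg, huu]
    simp [psi]
  have hfq : ff q = 0 := ff_zero hq0
  have hdist : dist p q = (2:ℝ)⁻¹ ^ n := by
    rw [hpdef, hqdef, dist_pt, sub_zero, abs_of_pos (by positivity)]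
  have hlip := hC.dist_le_mul p hpK q hqK
  rw [hfp, hfq, hdist, Real.dist_eq, sub_zero,
    abs_of_nonneg (by have := hn_pos n; positivity : (0:ℝ) ≤ (n:ℝ) * hn n)] at hlip
  rw [hn] at hlip
  have hpos := hn_pos n
  rw [hn] at hpos
  nlinarith [hlip, hCn, hpos]

lemma prodSet_sub : prodSet ⊆ Metric.closedBall (0 : E2) 2 := by
  intro p hp
  have h0 : |p 0| ≤ 1 := by
    rcases hp.1 with hz | ⟨n, hn'⟩
    · rw [hz]; norm_num
    · rw [hn', abs_of_pos (by positivity)]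
      exact pow_le_one₀ (by norm_num) (by norm_num)
  have h1 : |p 1| ≤ 1 := by
    rw [abs_le]; exact ⟨by linarith [hp.2.1], hp.2.2⟩
  rw [Metric.mem_closedBall, dist_zero_right, EuclideanSpace.norm_eq, Fin.sum_univ_two]
  have hsq : ‖p 0‖^2 + ‖p 1‖^2 ≤ 4 := by
    rw [Real.norm_eq_abs, Real.norm_eq_abs]
    nlinarith [abs_nonneg (p 0), abs_nonneg (p 1)]
  calc Real.sqrt (‖p 0‖^2 + ‖p 1‖^2) ≤ Real.sqrt 4 := Real.sqrt_le_sqrt hsq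
  _ = 2 := by rw [show (4:ℝ) = 2^2 by norm_num, Real.sqrt_sq (by norm_num)]

lemma notExt : ¬ ∃ F : E2 → ℝ, ContDiff ℝ 1 F ∧ EqOn F ff prodSet := by
  rintro ⟨F, hF, hEq⟩
  set s := Metric.closedBall (0:E2) 2 with hsdef
  have hconv : Convex ℝ s := convex_closedBall _ _
  have hcomp : IsCompact s := isCompact_closedBall _ _
  have hcont : ContinuousOn (fun x => fderiv ℝ F x) s :=
    (hF.continuous_fderiv one_ne_zero).continuousOn
  obtain ⟨B, hB⟩ := hcomp.exists_bound_of_continuousOn hcont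
  set C : NNReal := Real.toNNReal B with hCdef
  have hlip : LipschitzOnWith C F s := by
    apply hconv.lipschitzOnWith_of_nnnorm_fderiv_le
      (fun x _ => (hF.differentiable one_ne_zero) x)
    intro x hx
    rw [← NNReal.coe_le_coe, coe_nnnorm]
    exact le_trans (hB x hx) (Real.le_coe_toNNReal B)
  have h3 := hlip.mono prodSet_sub
  have hlip2 : LipschitzOnWith C ff prodSet := by
    intro x hx y hy
    rw [← hEq hx, ← hEq hy]
    exact h3 hx hy
  exact notLip ⟨C, hlip2⟩

/-- There is `f ∈ C¹(K)` on `K = M × [0,1]`, `M = {0} ∪ {2^{-n}}`, which is not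
Lipschitz on `K`; in particular `f` is not the restriction of any `C¹` function on
`ℝ²`, so `C¹(K) ≠ C¹(ℝ²|K)`. -/
theorem product_counterexample :
    ∃ (f : EuclideanSpace ℝ (Fin 2) → ℝ)
      (df : EuclideanSpace ℝ (Fin 2) → EuclideanSpace ℝ (Fin 2)),
      ContinuousOn df prodSet ∧ IsDerivOn prodSet f df ∧
      (¬ ∃ C : ℝ≥0, LipschitzOnWith C f prodSet) ∧
      (¬ ∃ F : EuclideanSpace ℝ (Fin 2) → ℝ, ContDiff ℝ 1 F ∧ EqOn F f prodSet) := by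
  exact ⟨ff, dff, cont_dff, isDeriv, notLip, notExt⟩
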